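/- For the system G(x,y) = (x·[(c−4)y − 5μ + 4μ(x+y) + x(x+3y−3) + 2], y·[c(y−1) + x(x+3y−1)]), the point (0, 1) (all-TFT) is an equilibrium, its Jacobian matrix at (0,1) is triangular with eigenvalues c − μ − 2 and c, and if 0 < c < μ + 2 then the eigenvalues have opposite signs, so (0,1) is a saddle point. -/

import Mathlib

/-- For the ALLD → ALLC replicator-mutator system, `(0,1)` (all-TFT) is an
equilibrium whose Jacobian is triangular with eigenvalues `c − μ − 2` and `c`;
if `0 < c < μ + 2` the eigenvalues have opposite signs, so `(0,1)` is a saddle. -/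
theorem TFT_vertex_saddle_ALLD_to_ALLC (c μ : ℝ)
    (G1 G2 : ℝ → ℝ → ℝ)
    (hG1 : ∀ x y, G1 x y
      = x * ((c - 4) * y - 5 * μ + 4 * μ * (x + y) + x * (x + 3 * y - 3) + 2))
    (hG2 : ∀ x y, G2 x y = y * (c * (y - 1) + x * (x + 3 * y - 1))) :
    G1 0 1 = 0 ∧ G2 0 1 = 0 ∧
    (deriv (fun x => G1 x 1) 0 = c - μ - 2 ∧
     deriv (fun y => G1 0 y) 1 = 0 ∧
     deriv (fun x => G2 x 1) 0 = 2 ∧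
     deriv (fun y => G2 0 y) 1 = c) ∧
    (0 < c → c < μ + 2 → c - μ - 2 < 0 ∧ 0 < c) := by
  have e1 : (fun x => G1 x 1) = fun x : ℝ => x ^ 3 + 4 * μ * x ^ 2 + (c - μ - 2) * x := by
    funext x; rw [hG1]; ring
  have e2 : (fun y => G1 0 y) = fun _ : ℝ => (0 : ℝ) := by
    funext y; rw [hG1]; ring
  have e3 : (fun x => G2 x 1) = fun x : ℝ => x ^ 2 + 2 * x := by
    funext x; rw [hG2]; ring
  have e4 : (fun y => G2 0 y) = fun y : ℝ => c * y ^ 2 - c * y := by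
    funext y; rw [hG2]; ring
  have d1 : HasDerivAt (fun x : ℝ => x ^ 3 + 4 * μ * x ^ 2 + (c - μ - 2) * x)
      (c - μ - 2) 0 := by
    have := ((hasDerivAt_pow 3 (0 : ℝ)).add
      ((hasDerivAt_pow 2 (0 : ℝ)).const_mul (4 * μ))).add
      ((hasDerivAt_id (0 : ℝ)).const_mul (c - μ - 2))
    convert this using 1 <;> first | rfl | (push_cast; ring)
  have d3 : HasDerivAt (fun x : ℝ => x ^ 2 + 2 * x) (2 : ℝ) 0 := by
    have := (hasDerivAt_pow 2 (0 : ℝ)).add ((hasDerivAt_id (0 : ℝ)).const_mul 2)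
    convert this using 1 <;> first | rfl | (push_cast; ring)
  have d4 : HasDerivAt (fun y : ℝ => c * y ^ 2 - c * y) c 1 := by
    have := ((hasDerivAt_pow 2 (1 : ℝ)).const_mul c).sub
      ((hasDerivAt_id (1 : ℝ)).const_mul c)
    convert this using 1 <;> first | rfl | (push_cast; ring)
  refine ⟨by rw [hG1]; ring, by rw [hG2]; ring,
    ⟨by rw [e1]; exact d1.deriv, by rw [e2]; exact deriv_const _ _,
     by rw [e3]; exact d3.deriv, by rw [e4]; exact d4.deriv⟩,
    fun h1 h2 => ⟨by linarith, h1⟩⟩
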